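/- arXiv:math/0007164 — 3 statements merged into one kernel-verified Lean document; each statement's English description precedes it below -/
import Mathlib

section
/- Let G be a finite group and H, K subgroups. The number of double cosets K\G/H equals (|G|/(|K||H|)) · Σ over pairs (k, h) ∈ K × H with k conjugate to h of 1/c(k), where c(k) is the size of the conjugacy class of k in G. -/
open scoped Classical

namespace DosetBurnside

variable {G : Type} [Group G] [Fintype G]

/-- The action of `K × H` on `G` by `(k, h) • g = k * g * h⁻¹`. -/
instance mulAction (K H : Subgroup G) : MulAction (K × H) G where
  smul p g := (p.1 : G) * g * (p.2 : G)⁻¹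
  one_smul g := by
    show ((1 : K) : G) * g * ((1 : H) : G)⁻¹ = g
    simp
  mul_smul p q g := by
    show ((p.1 * q.1 : K) : G) * g * ((p.2 * q.2 : H) : G)⁻¹
        = (p.1 : G) * ((q.1 : G) * g * (q.2 : G)⁻¹) * (p.2 : G)⁻¹
    push_cast
    group

omit [Fintype G] in
lemma smul_def (K H : Subgroup G) (p : K × H) (g : G) :
    p • g = (p.1 : G) * g * (p.2 : G)⁻¹ := rfl

/-- The doset quotient is the orbit quotient of the `K × H` action. -/
noncomputable def quotEquiv (K H : Subgroup G) :
    DoubleCoset.Quotient (K : Set G) (H : Set G)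
      ≃ Quotient (MulAction.orbitRel (K × H) G) := by
  refine Quotient.congrRight fun a b => ?_
  rw [show (DoubleCoset.setoid (K : Set G) (H : Set G)) a b ↔ _ from DoubleCoset.rel_iff]
  rw [MulAction.orbitRel_apply, MulAction.mem_orbit_iff]
  constructor
  · rintro ⟨x, hx, y, hy, rfl⟩
    refine ⟨((⟨x, hx⟩ : K)⁻¹, (⟨y, hy⟩ : H)), ?_⟩
    show x⁻¹ * (x * a * y) * y⁻¹ = a
    group
  · rintro ⟨p, rfl⟩
    refine ⟨(↑p.1)⁻¹, K.inv_mem p.1.2, ↑p.2, p.2.2, ?_⟩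
    rw [smul_def]
    group

/-- Fixed points of `(k,h)` are `{g | g⁻¹ * k * g = h}`. -/
def fixEquiv (K H : Subgroup G) (p : K × H) :
    MulAction.fixedBy G p ≃ {g : G // g⁻¹ * (p.1 : G) * g = (p.2 : G)} :=
  Equiv.subtypeEquivRight fun g => by
    rw [MulAction.mem_fixedBy, smul_def, mul_inv_eq_iff_eq_mul,
      mul_assoc g⁻¹, inv_mul_eq_iff_eq_mul]

/-- If `g₀⁻¹ * k * g₀ = h`, transporters from `k` to `h` biject with the stabilizer of `k`
under conjugation. -/
def transporterEquiv (k h g₀ : G) (hg₀ : g₀⁻¹ * k * g₀ = h) :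
    {g : G // g⁻¹ * k * g = h} ≃ MulAction.stabilizer (ConjAct G) k where
  toFun gp := ⟨ConjAct.toConjAct (gp.1 * g₀⁻¹), by
    obtain ⟨g, hg⟩ := gp
    rw [MulAction.mem_stabilizer_iff, ConjAct.smul_def, ConjAct.ofConjAct_toConjAct]
    calc g * g₀⁻¹ * k * (g * g₀⁻¹)⁻¹
        = g * (g₀⁻¹ * k * g₀) * g⁻¹ := by group
      _ = g * h * g⁻¹ := by rw [hg₀]
      _ = g * (g⁻¹ * k * g) * g⁻¹ := by rw [hg]
      _ = k := by group⟩
  invFun s := ⟨ConjAct.ofConjAct s.1 * g₀, by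
    have hs : ConjAct.ofConjAct s.1 * k * (ConjAct.ofConjAct s.1)⁻¹ = k := by
      have := s.2
      rwa [MulAction.mem_stabilizer_iff, ConjAct.smul_def] at this
    set x := ConjAct.ofConjAct s.1 with hx
    rw [mul_inv_eq_iff_eq_mul] at hs
    have hs' : x⁻¹ * k * x = k := by
      rw [mul_assoc, ← hs]
      group
    calc (x * g₀)⁻¹ * k * (x * g₀)
        = g₀⁻¹ * (x⁻¹ * k * x) * g₀ := by group
      _ = g₀⁻¹ * k * g₀ := by rw [hs']
      _ = h := hg₀⟩
  left_inv gp := by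
    ext
    simp
  right_inv s := by
    ext
    simp

/-- The conjugacy class of `k` bijects with the orbit of `k` under conjugation. -/
def conjClassEquiv (k : G) :
    {b : G // IsConj k b} ≃ MulAction.orbit (ConjAct G) k :=
  Equiv.subtypeEquivRight fun b => by
    rw [ConjAct.mem_orbit_conjAct, isConj_comm]

lemma key_count (k h : G) :
    (if IsConj k h then ((Nat.card {b : G // IsConj k b} : ℚ))⁻¹ else 0)
      = (Nat.card {g : G // g⁻¹ * k * g = h} : ℚ) / (Fintype.card G : ℚ) := by
  by_cases hc : IsConj k h
  · rw [if_pos hc]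
    obtain ⟨c, hcc⟩ := isConj_iff.mp hc
    have hg₀ : (c⁻¹ : G)⁻¹ * k * c⁻¹ = h := by rw [inv_inv]; rw [← hcc]
    have horb : Nat.card (MulAction.orbit (ConjAct G) k) *
        Nat.card (MulAction.stabilizer (ConjAct G) k) = Fintype.card G := by
      simp only [Nat.card_eq_fintype_card]
      rw [MulAction.card_orbit_mul_card_stabilizer_eq_card_group (ConjAct G) k]
      exact ConjAct.card (G := G)
    have hkey : (Nat.card {b : G // IsConj k b} : ℚ) *
        (Nat.card {g : G // g⁻¹ * k * g = h} : ℚ) = (Fintype.card G : ℚ) := by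
      rw [Nat.card_congr (conjClassEquiv k),
        Nat.card_congr (transporterEquiv k h c⁻¹ hg₀)]
      exact_mod_cast congrArg (Nat.cast (R := ℚ)) horb
    have hne : (Nat.card {b : G // IsConj k b} : ℚ) ≠ 0 := by
      have : Nat.card {b : G // IsConj k b} ≠ 0 :=
        Nat.card_ne_zero.mpr ⟨⟨⟨k, IsConj.refl k⟩⟩, inferInstance⟩
      exact_mod_cast this
    have hb0 : (Nat.card {g : G // g⁻¹ * k * g = h} : ℚ) ≠ 0 := by
      intro h0
      rw [h0, mul_zero] at hkey
      have : (Fintype.card G : ℚ) ≠ 0 := by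
        exact_mod_cast Fintype.card_ne_zero
      exact this hkey.symm
    rw [← hkey, eq_div_iff (mul_ne_zero hne hb0), inv_mul_cancel_left₀ hne]
  · rw [if_neg hc]
    have : IsEmpty {g : G // g⁻¹ * k * g = h} := by
      constructor
      rintro ⟨g, hg⟩
      exact hc (isConj_iff.mpr ⟨g⁻¹, by rw [inv_inv]; exact hg⟩)
    rw [Nat.card_of_isEmpty]
    simp

end DosetBurnside

/-- The number of double cosets `K\G/H` equals
`(|G|/(|K||H|)) ⬝ Σ_{(k,h) ∈ K × H, k ∼ h} 1/c(k)`, where `c(k)` is the size of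
the conjugacy class of `k` in `G`. -/
theorem card_doset_quotient_eq_conjugate_pair_sum
    {G : Type} [Group G] [Fintype G] (H K : Subgroup G) :
    (Nat.card (DoubleCoset.Quotient (K : Set G) (H : Set G)) : ℚ)
      = (Fintype.card G : ℚ) / ((Nat.card K : ℚ) * (Nat.card H : ℚ)) *
          ∑ k : K, ∑ h : H,
            if IsConj (k : G) (h : G) then
              ((Nat.card {b : G // IsConj (k : G) b} : ℚ))⁻¹
            else 0 := by
  have burnside := MulAction.sum_card_fixedBy_eq_card_orbits_mul_card_group (K × H) G
  have hquot : Nat.card (DoubleCoset.Quotient (K : Set G) (H : Set G))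
      = Fintype.card (Quotient (MulAction.orbitRel (K × H) G)) := by
    rw [Nat.card_congr (DosetBurnside.quotEquiv K H), Nat.card_eq_fintype_card]
  rw [hquot]
  have hsum : ∑ k : K, ∑ h : H,
      (if IsConj (k : G) (h : G) then
        ((Nat.card {b : G // IsConj (k : G) b} : ℚ))⁻¹ else 0)
      = ∑ p : K × H,
          (Fintype.card (MulAction.fixedBy G p) : ℚ) / (Fintype.card G : ℚ) := by
    rw [Fintype.sum_prod_type]
    refine Finset.sum_congr rfl fun k _ => Finset.sum_congr rfl fun h _ => ?_
    rw [DosetBurnside.key_count (k : G) (h : G)]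
    congr 2
    rw [← Nat.card_eq_fintype_card, Nat.card_congr (DosetBurnside.fixEquiv K H (k, h))]
  rw [hsum]
  have hG : (Fintype.card G : ℚ) ≠ 0 := by exact_mod_cast Fintype.card_ne_zero
  have hKH : (Nat.card K : ℚ) * (Nat.card H : ℚ)
      = (Fintype.card (K × H) : ℚ) := by
    rw [Fintype.card_prod]
    push_cast [Nat.card_eq_fintype_card]
    ring
  have hb : (∑ p : K × H, (Fintype.card (MulAction.fixedBy G p) : ℚ))
      = (Fintype.card (Quotient (MulAction.orbitRel (K × H) G)) : ℚ)
          * (Fintype.card (K × H) : ℚ) := by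
    exact_mod_cast congrArg (Nat.cast (R := ℚ)) burnside
  rw [← Finset.sum_div, hb, hKH]
  have hKH' : (Fintype.card (K × H) : ℚ) ≠ 0 := by
    exact_mod_cast Fintype.card_ne_zero
  field_simp
end

section
/- Let G be a finite group all of whose complex characters are rational-valued. Let H₁, …, H_N be representatives of the conjugacy classes of cyclic subgroups of G (one for each conjugacy class of elements, with H_i generated by a representative element), and ρ₁, …, ρ_N the irreducible complex representations of G. Then the N × N matrix M with entries M_{ij} = dim ρ_j^{H_i} is invertible. -/
open Polynomial IntermediateField

open Polynomial IntermediateField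

lemma pow_mod_eq {Mo : Type*} [Monoid Mo] {f : Mo} {n : ℕ} (hf : f ^ n = 1) (a : ℕ) :
    f ^ (a % n) = f ^ a := by
  conv_rhs => rw [← Nat.div_add_mod a n, pow_add, pow_mul, hf, one_pow, one_mul]

lemma zmod_sum_val {n : ℕ} [NeZero n] {M : Type*} [AddCommMonoid M] (g : ℕ → M) :
    ∑ a : ZMod n, g a.val = ∑ i ∈ Finset.range n, g i := by
  refine Finset.sum_nbij' (fun a => a.val) (fun i => (i : ZMod n)) ?_ ?_ ?_ ?_ ?_ <;>
    simp +contextual [ZMod.val_lt, ZMod.natCast_rightInverse _, ZMod.val_natCast,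
      Nat.mod_eq_of_lt]

lemma trace_pow_coprime {E : Type} [AddCommGroup E] [Module ℂ E] [FiniteDimensional ℂ E]
    (f : Module.End ℂ E) {n : ℕ} (hn : 0 < n) (hf : f ^ n = 1)
    (hrat : ∀ k : ℕ, ∃ q : ℚ, LinearMap.trace ℂ E (f ^ k) = (q : ℂ))
    {m : ℕ} (hm : Nat.Coprime m n) :
    LinearMap.trace ℂ E (f ^ m) = LinearMap.trace ℂ E f := by
  rcases eq_or_lt_of_le (Nat.one_le_iff_ne_zero.mpr hn.ne') with h1 | hn2
  · have hf1 : f = 1 := by simpa [← h1] using hf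
    simp [hf1]
  haveI : NeZero n := ⟨hn.ne'⟩
  haveI : Fact (1 < n) := ⟨hn2⟩
  set ζ : ℂ := Complex.exp (2 * Real.pi * Complex.I / n) with hζdef
  have hζ : IsPrimitiveRoot ζ n := Complex.isPrimitiveRoot_exp n hn.ne'
  have hζ1 : ζ ^ n = 1 := hζ.pow_eq_one
  set ε : ZMod n → ℂ := fun x => ζ ^ x.val with hεdef
  set F : ZMod n → Module.End ℂ E := fun x => f ^ x.val with hFdef
  have hεadd : ∀ x y : ZMod n, ε (x + y) = ε x * ε y := by
    intro x y
    show ζ ^ _ = ζ ^ _ * ζ ^ _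
    rw [ZMod.val_add, pow_mod_eq hζ1, pow_add]
  have hFadd : ∀ x y : ZMod n, F (x + y) = F x * F y := by
    intro x y
    show f ^ _ = f ^ _ * f ^ _
    rw [ZMod.val_add, pow_mod_eq hf, pow_add]
  have hεpow : ∀ c : ZMod n, (ε c) ^ n = 1 := by
    intro c
    show (ζ ^ _) ^ n = 1
    rw [← pow_mul, mul_comm, pow_mul, hζ1, one_pow]
  -- orthogonality sum
  have hS : ∀ c : ZMod n, ∑ a : ZMod n, ε (a * c) = if c = 0 then (n : ℂ) else 0 := by
    intro c
    have h1 : ∀ a : ZMod n, ε (a * c) = (ε c) ^ a.val := by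
      intro a
      show ζ ^ _ = (ζ ^ _) ^ _
      rw [ZMod.val_mul, pow_mod_eq hζ1, mul_comm a.val, pow_mul]
    rw [Finset.sum_congr rfl fun a _ => h1 a]
    rw [show ∑ a : ZMod n, (ε c) ^ a.val = ∑ i ∈ Finset.range n, (ε c) ^ i from
      zmod_sum_val _]
    split_ifs with hc
    · simp [hc, hεdef, ZMod.val_zero]
    · have hne : ε c ≠ 1 :=
        hζ.pow_ne_one_of_pos_of_lt (ZMod.val_pos.mpr hc).ne' (ZMod.val_lt c)
      rw [geom_sum_eq hne, hεpow c, sub_self, zero_div]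
  set P : ZMod n → Module.End ℂ E :=
    fun a => (n : ℂ)⁻¹ • ∑ k : ZMod n, ε (-(a * k)) • F k with hPdef
  have hnc : (n : ℂ) ≠ 0 := Nat.cast_ne_zero.mpr hn.ne'
  have hPP : ∀ a, P a * P a = P a := by
    intro a
    have hSS : (∑ k : ZMod n, ε (-(a * k)) • F k) * (∑ l : ZMod n, ε (-(a * l)) • F l)
        = (n : ℂ) • ∑ j : ZMod n, ε (-(a * j)) • F j := by
      rw [Finset.sum_mul_sum]
      have : ∀ k : ZMod n, ∑ l : ZMod n, (ε (-(a * k)) • F k) * (ε (-(a * l)) • F l)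
          = ∑ j : ZMod n, ε (-(a * j)) • F j := by
        intro k
        refine Fintype.sum_equiv (Equiv.addLeft k) _ _ (fun l => ?_)
        rw [smul_mul_smul_comm, ← hεadd, ← hFadd]
        simp only [Equiv.coe_addLeft]
        congr 2
        ring
      rw [Finset.sum_congr rfl fun k _ => this k, Finset.sum_const, Finset.card_univ,
        ZMod.card, ← Nat.cast_smul_eq_nsmul ℂ]
    rw [hPdef]
    simp only []
    rw [smul_mul_smul_comm, hSS, smul_smul]
    congr 1
    field_simp
  set t : ZMod n → ℂ := fun k => LinearMap.trace ℂ E (F k) with htdef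
  have htrP : ∀ a, LinearMap.trace ℂ E (P a) = (n : ℂ)⁻¹ * ∑ k : ZMod n, ε (-(a * k)) * t k := by
    intro a
    rw [hPdef]
    simp only [map_smul, map_sum, smul_eq_mul]
    rfl
  have hFour : ∀ j : ZMod n, ∑ a : ZMod n, LinearMap.trace ℂ E (P a) * ε (a * j) = t j := by
    intro j
    have key : ∀ a : ZMod n, LinearMap.trace ℂ E (P a) * ε (a * j)
        = (n : ℂ)⁻¹ * ∑ k : ZMod n, t k * ε (a * (j - k)) := by
      intro a
      rw [htrP a, mul_assoc, Finset.sum_mul]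
      congr 1
      refine Finset.sum_congr rfl fun k _ => ?_
      rw [mul_comm (ε (-(a * k))) (t k), mul_assoc, ← hεadd]
      congr 2
      ring
    rw [Finset.sum_congr rfl fun a _ => key a, ← Finset.mul_sum, Finset.sum_comm]
    have h2 : ∀ k : ZMod n, ∑ a : ZMod n, t k * ε (a * (j - k))
        = t k * if j - k = 0 then (n:ℂ) else 0 := by
      intro k
      rw [← Finset.mul_sum, hS (j - k)]
    rw [Finset.sum_congr rfl fun k _ => h2 k]
    have h3 : ∑ k : ZMod n, (t k * if j - k = 0 then (n:ℂ) else 0) = t j * n := by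
      rw [Finset.sum_eq_single j]
      · simp
      · intro k _ hkj
        have hne : j - k ≠ 0 := fun hc => hkj (by
          rw [sub_eq_zero] at hc; exact hc.symm)
        simp [hne]
      · simp
    rw [h3]
    field_simp
  -- trace of idempotent is a natural number
  have htP : ∀ a : ZMod n, ∃ N : ℕ, LinearMap.trace ℂ E (P a) = N := by
    intro a
    obtain ⟨p, hp⟩ := (LinearMap.isProj_iff_isIdempotentElem (P a)).mpr
      (hPP a)
    exact ⟨Module.finrank ℂ p, hp.trace⟩
  choose N hN using htP
  -- values of t
  have ht1 : t 1 = LinearMap.trace ℂ E f := by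
    rw [htdef]
    show LinearMap.trace ℂ E (f ^ (1 : ZMod n).val) = _
    rw [ZMod.val_one n, pow_one]
  have htm : t (m : ZMod n) = LinearMap.trace ℂ E (f ^ m) := by
    rw [htdef]
    show LinearMap.trace ℂ E (f ^ ((m : ZMod n)).val) = _
    rw [ZMod.val_natCast, pow_mod_eq hf]
  -- the galois automorphism
  have hint : IsIntegral ℚ ζ := ⟨X ^ n - C 1, monic_X_pow_sub_C 1 hn.ne', by
    simp [hζ1]⟩
  set pb := IntermediateField.adjoin.powerBasis hint with hpbdef
  have hy : (aeval (ζ ^ m)) (minpoly ℚ pb.gen) = 0 := by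
    rw [hpbdef, IntermediateField.adjoin.powerBasis_gen]
    erw [IntermediateField.minpoly_gen]
    rw [← cyclotomic_eq_minpoly_rat hζ hn, aeval_def, eval₂_eq_eval_map, map_cyclotomic]
    exact (hζ.pow_of_coprime m hm).isRoot_cyclotomic hn
  set σ := pb.lift (ζ ^ m) hy with hσdef
  set ζK : ℚ⟮ζ⟯ := IntermediateField.AdjoinSimple.gen ℚ ζ with hζKdef
  have hσζ : σ ζK = ζ ^ m := by
    rw [hσdef, hζKdef, ← IntermediateField.adjoin.powerBasis_gen hint]
    exact PowerBasis.lift_gen _ _ _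
  have hembζ : algebraMap ℚ⟮ζ⟯ ℂ ζK = ζ := IntermediateField.AdjoinSimple.algebraMap_gen ℚ ζ
  set s : ℚ⟮ζ⟯ := ∑ a : ZMod n, (N a : ℚ⟮ζ⟯) * ζK ^ a.val with hsdef
  have hemb_s : algebraMap ℚ⟮ζ⟯ ℂ s = LinearMap.trace ℂ E f := by
    rw [hsdef, map_sum, ← ht1, ← hFour 1]
    refine Finset.sum_congr rfl fun a _ => ?_
    rw [map_mul, map_pow, hembζ, map_natCast, hN a, mul_one]
  obtain ⟨q, hq⟩ := hrat 1
  rw [pow_one] at hq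
  have hs : s = (q : ℚ⟮ζ⟯) := by
    apply (algebraMap ℚ⟮ζ⟯ ℂ).injective
    rw [hemb_s, map_ratCast, hq]
  have hσs : σ s = LinearMap.trace ℂ E (f ^ m) := by
    rw [hsdef, map_sum, ← htm, ← hFour (m : ZMod n)]
    refine Finset.sum_congr rfl fun a _ => ?_
    rw [map_mul, map_pow, hσζ, map_natCast, hN a]
    congr 1
    show (ζ ^ m) ^ a.val = ζ ^ (a * (m : ZMod n)).val
    rw [ZMod.val_mul, ZMod.val_natCast, pow_mod_eq hζ1, mul_comm a.val (m % n), pow_mul,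
      pow_mod_eq hζ1]
  rw [← hσs, hs, map_ratCast, hq]

lemma zpowers_isCyclic' {G : Type} [Group G] (g : G) : IsCyclic (Subgroup.zpowers g) :=
  ⟨⟨⟨g, Subgroup.mem_zpowers g⟩, fun x => by
    obtain ⟨k, hk⟩ := x.2
    exact ⟨k, Subtype.ext (by simpa using hk)⟩⟩⟩

lemma char_pow_coprime_aux {G : Type} [Group G] [Fintype G] (V : FDRep ℂ G)
    (hratV : ∀ x : G, ∃ q : ℚ, V.character x = (q : ℂ)) (g : G) {m : ℕ}
    (hm : Nat.Coprime m (orderOf g)) : V.character (g ^ m) = V.character g := by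
  have hchar : ∀ x : G, V.character x = LinearMap.trace ℂ V (V.ρ x) := fun x => rfl
  have hpow : ∀ k : ℕ, (V.ρ g) ^ k = V.ρ (g ^ k) := fun k => (map_pow V.ρ g k).symm
  have hf : (V.ρ g) ^ (orderOf g) = 1 := by
    rw [hpow, pow_orderOf_eq_one, map_one]
  have key := trace_pow_coprime (V.ρ g) (orderOf_pos g) hf
    (fun k => by rw [hpow]; exact hratV (g ^ k)) hm
  rw [hpow] at key
  rw [hchar, hchar, key]

/-- Let `G` be a finite group all of whose complex characters are rational-valued,
`h i` representatives of the conjugacy classes of `G` (whose generated cyclic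
subgroups `Hᵢ = ⟨h i⟩` then represent the conjugacy classes of cyclic subgroups),
and `ρ j` the irreducible complex representations.  Then the matrix
`M i j = dim ρⱼ^{Hᵢ}` is invertible. -/
theorem matrix_finrank_invariants_isUnit
    {G : Type} [Group G] [Fintype G]
    {ι : Type} [Fintype ι] [DecidableEq ι] (ρ : ι → FDRep ℂ G)
    (hirr : ∀ i, CategoryTheory.Simple (ρ i))
    (hdist : ∀ i j, Nonempty (ρ i ≅ ρ j) → i = j)
    (hcomplete : ∀ V : FDRep ℂ G, CategoryTheory.Simple V → ∃ i, Nonempty (ρ i ≅ V))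
    (hrat : ∀ (V : FDRep ℂ G) (g : G), ∃ q : ℚ, V.character g = (q : ℂ))
    (h : ι → G)
    (hrep : ∀ i j, IsConj (h i) (h j) → i = j)
    (hsurj : ∀ g : G, ∃ i, IsConj g (h i)) :
    IsUnit (Matrix.of fun i j : ι =>
      (Module.finrank ℂ (Representation.invariants
        ((ρ j).ρ.comp (Subgroup.zpowers (h i)).subtype)) : ℚ)) := by
  classical
  set Mq : Matrix ι ι ℚ := Matrix.of fun i j : ι =>
      (Module.finrank ℂ (Representation.invariants
        ((ρ j).ρ.comp (Subgroup.zpowers (h i)).subtype)) : ℚ) with hMq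
  set cl : G → ι := fun g => (hsurj g).choose with hcldef
  have hcl : ∀ g : G, IsConj g (h (cl g)) := fun g => (hsurj g).choose_spec
  have hclh : ∀ k : ι, cl (h k) = k := fun k => (hrep k (cl (h k)) (hcl (h k))).symm
  have hχconj : ∀ (V : FDRep ℂ G) (g : G), V.character g = V.character (h (cl g)) := by
    intro V g
    obtain ⟨c, hc⟩ := isConj_iff.mp (hcl g)
    rw [← hc, FDRep.char_conj]
  have hoconj : ∀ g : G, orderOf (h (cl g)) = orderOf g := by
    intro g
    obtain ⟨c, hc⟩ := isConj_iff.mp (hcl g)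
    rw [← hc, show c * g * c⁻¹ = (MulAut.conj c) g from rfl]
    exact orderOf_injective (MulAut.conj c).toMonoidHom (MulAut.conj c).injective g
  set n : ι → ℕ := fun i => orderOf (h i) with hndef
  have hn : ∀ i, 0 < n i := fun i => orderOf_pos _
  have hord : ∀ i d, d ∈ (n i).divisors → orderOf ((h i) ^ (n i / d)) = d := by
    intro i d hd
    obtain ⟨hdvd, hne⟩ := Nat.mem_divisors.mp hd
    have he : (n i / d) ∣ n i := Nat.div_dvd_of_dvd hdvd
    rw [orderOf_pow, Nat.gcd_eq_right he]
    exact Nat.div_div_self hdvd hne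
  set T : Matrix ι ι ℚ := Matrix.of fun i k =>
    ∑ d ∈ (n i).divisors, if cl ((h i) ^ (n i / d)) = k then (d.totient : ℚ) else 0 with hTdef
  set X : Matrix ι ι ℂ := Matrix.of fun k j => (ρ j).character (h k) with hXdef
  -- The key matrix identity
  have MAIN : Matrix.diagonal (fun i => (n i : ℂ)) * (Mq.map fun q => (q : ℂ))
      = (T.map fun q => (q : ℂ)) * X := by
    ext i j
    rw [Matrix.diagonal_mul, Matrix.mul_apply]
    set H := Subgroup.zpowers (h i) with hHdef
    have hcardH : Fintype.card H = n i := by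
      rw [← Nat.card_eq_fintype_card]; exact Nat.card_zpowers _
    haveI : Invertible ((Nat.card H : ℂ)) :=
      invertibleOfNonzero (Nat.cast_ne_zero.mpr Nat.card_pos.ne')
    -- step a
    have havg := FDRep.average_char_eq_finrank_invariants
      (FDRep.of ((ρ j).ρ.comp H.subtype))
    have hch : ∀ x : H, (FDRep.of ((ρ j).ρ.comp H.subtype)).character x
        = (ρ j).character ↑x := fun x => rfl
    have hρ : (FDRep.of ((ρ j).ρ.comp H.subtype)).ρ = (ρ j).ρ.comp H.subtype :=
      FDRep.of_ρ' _
    rw [Finset.sum_congr rfl fun x _ => hch x, hρ] at havg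
    have hcne : (Fintype.card H : ℂ) ≠ 0 := Nat.cast_ne_zero.mpr Fintype.card_ne_zero
    rw [Nat.card_eq_fintype_card, inv_mul_eq_iff_eq_mul₀ hcne] at havg
    have havg' : ∑ x : H, (ρ j).character ↑x
        = (Fintype.card H : ℂ) * ((Module.finrank ℂ (Representation.invariants
            ((ρ j).ρ.comp H.subtype)) : ℕ) : ℂ) := havg
    have stepa : (n i : ℂ) * (Mq.map fun q => (q : ℂ)) i j
        = ∑ x : H, (ρ j).character ↑x := by
      have h1 : (Mq.map fun q => (q : ℂ)) i j = ((Module.finrank ℂ (Representation.invariants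
          ((ρ j).ρ.comp H.subtype)) : ℚ) : ℂ) := rfl
      rw [h1, havg', hcardH]
      push_cast
      ring
    rw [stepa]
    -- step b
    have stepb : ∑ x : H, (ρ j).character ↑x
        = ∑ d ∈ (n i).divisors, (d.totient : ℂ) * (ρ j).character ((h i) ^ (n i / d)) := by
      have hmaps : ∀ x : H, x ∈ Finset.univ → orderOf (x : G) ∈ (n i).divisors :=
        fun x _ => Nat.mem_divisors.mpr ⟨orderOf_dvd_of_mem_zpowers x.2, (hn i).ne'⟩
      rw [← Finset.sum_fiberwise_of_maps_to hmaps (fun x : H => (ρ j).character ↑x)]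
      refine Finset.sum_congr rfl fun d hd => ?_
      obtain ⟨hdvd, hne⟩ := Nat.mem_divisors.mp hd
      have hd0 : 0 < d := Nat.pos_of_mem_divisors hd
      have hyo : orderOf ((h i) ^ (n i / d)) = d := hord i d hd
      have hsame : ∀ x : H, orderOf (x : G) = d →
          (ρ j).character ↑x = (ρ j).character ((h i) ^ (n i / d)) := by
        intro x hx
        obtain ⟨a, ha⟩ := (isOfFinOrder_of_finite (h i)).mem_powers_iff_mem_zpowers.mpr x.2
        have ha' : (h i) ^ a = (x : G) := ha
        have hed : (n i / d) * d = n i := Nat.div_mul_cancel hdvd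
        have hgcd : Nat.gcd (n i) a = n i / d := by
          have h1 : orderOf ((h i) ^ a) = d := by rw [ha']; exact hx
          rw [orderOf_pow] at h1
          have hg : Nat.gcd (n i) a ∣ n i := Nat.gcd_dvd_left _ _
          have h2 : n i = d * Nat.gcd (n i) a :=
            (Nat.div_eq_iff_eq_mul_left (Nat.pos_of_dvd_of_pos hg (hn i)) hg).mp h1
          have h3 : Nat.gcd (n i) a * d = (n i / d) * d := by
            conv_rhs => rw [hed, h2, Nat.mul_comm]
          exact Nat.eq_of_mul_eq_mul_right hd0 h3
        have hea : (n i / d) ∣ a := hgcd ▸ Nat.gcd_dvd_right (n i) a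
        have hab : a = (n i / d) * (a / (n i / d)) := (Nat.mul_div_cancel' hea).symm
        have hx' : (x : G) = ((h i) ^ (n i / d)) ^ (a / (n i / d)) := by
          rw [← pow_mul, ← hab, ha']
        have hcop : Nat.Coprime (a / (n i / d)) d := by
          have h4 : orderOf (((h i) ^ (n i / d)) ^ (a / (n i / d))) = d := by
            rw [← hx']; exact hx
          rw [orderOf_pow, hyo] at h4
          have hg : Nat.gcd d (a / (n i / d)) ∣ d := Nat.gcd_dvd_left _ _
          have h5 : d = d * Nat.gcd d (a / (n i / d)) :=
            (Nat.div_eq_iff_eq_mul_left (Nat.pos_of_dvd_of_pos hg hd0) hg).mp h4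
          have h6 : Nat.gcd d (a / (n i / d)) = 1 := by
            have := Nat.eq_of_mul_eq_mul_left hd0 (h5.symm.trans (mul_one d).symm)
            omega
          exact Nat.coprime_comm.mp h6
        rw [hx']
        exact char_pow_coprime_aux (ρ j) (hrat (ρ j)) _ (by rw [hyo]; exact hcop)
      rw [Finset.sum_congr rfl fun x hx =>
        hsame x (Finset.mem_filter.mp hx).2, Finset.sum_const]
      have hcard : (Finset.filter (fun x : H => orderOf (x : G) = d) Finset.univ).card
          = d.totient := by
        haveI : IsCyclic H := zpowers_isCyclic' (h i)
        have heq : (Finset.filter (fun x : H => orderOf (x : G) = d) Finset.univ)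
            = (Finset.filter (fun x : H => orderOf x = d) Finset.univ) := by
          refine Finset.filter_congr fun x _ => ?_
          rw [Subgroup.orderOf_coe]
        rw [heq]
        exact IsCyclic.card_orderOf_eq_totient (by rw [hcardH]; exact hdvd)
      rw [hcard, nsmul_eq_mul]
    rw [stepb]
    -- step c
    have hcast : ∀ k, ((T i k : ℚ) : ℂ)
        = ∑ d ∈ (n i).divisors, (if cl ((h i) ^ (n i / d)) = k then (d.totient : ℂ) else 0) := by
      intro k
      show ((∑ d ∈ (n i).divisors, if cl ((h i) ^ (n i / d)) = k
          then (d.totient : ℚ) else 0 : ℚ) : ℂ) = _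
      push_cast [apply_ite (fun q : ℚ => (q : ℂ))]
      rfl
    have hXc : ∀ d ∈ (n i).divisors, (ρ j).character ((h i) ^ (n i / d))
        = X (cl ((h i) ^ (n i / d))) j := fun d _ => hχconj (ρ j) _
    calc ∑ d ∈ (n i).divisors, (d.totient : ℂ) * (ρ j).character ((h i) ^ (n i / d))
        = ∑ d ∈ (n i).divisors, ∑ k, (if cl ((h i) ^ (n i / d)) = k
            then (d.totient : ℂ) * X k j else 0) := by
          refine Finset.sum_congr rfl fun d hd => ?_
          rw [Finset.sum_ite_eq]
          simp [hXc d hd]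
      _ = ∑ k, ∑ d ∈ (n i).divisors, (if cl ((h i) ^ (n i / d)) = k
            then (d.totient : ℂ) else 0) * X k j := by
          rw [Finset.sum_comm]
          exact Finset.sum_congr rfl fun k _ => Finset.sum_congr rfl fun d _ => by
            rw [ite_mul, zero_mul]
      _ = ∑ k, (T.map fun q => (q : ℂ)) i k * X k j := by
          refine Finset.sum_congr rfl fun k _ => ?_
          rw [← Finset.sum_mul]
          congr 1
          exact (hcast k).symm
  -- determinant of X is nonzero
  have hXdet : X.det ≠ 0 := by
    intro hdet
    obtain ⟨w, hw0, hwX⟩ := Matrix.exists_mulVec_eq_zero_iff.mpr hdet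
    have hres : ∀ k, ∑ j, X k j * w j = 0 := by
      intro k
      have := congrFun hwX k
      simpa [Matrix.mulVec, dotProduct] using this
    have hallg : ∀ g : G, ∑ j, (ρ j).character g * w j = 0 := by
      intro g
      calc ∑ j, (ρ j).character g * w j = ∑ j, X (cl g) j * w j :=
            Finset.sum_congr rfl fun j _ => by rw [hχconj (ρ j) g]; rfl
        _ = 0 := hres (cl g)
    have hcne : (Fintype.card G : ℂ) ≠ 0 := Nat.cast_ne_zero.mpr Fintype.card_ne_zero
    letI hFG : Fintype ↑(GrpCat.of G) := ‹Fintype G›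
    haveI : Invertible ((Nat.card G : ℂ)) :=
      invertibleOfNonzero (Nat.cast_ne_zero.mpr Nat.card_pos.ne')
    have horth : ∀ j j' : ι, ∑ g : G, (ρ j).character g * (ρ j').character g⁻¹
        = (Fintype.card G : ℂ) * (if j = j' then 1 else 0) := by
      intro j j'
      haveI := hirr j; haveI := hirr j'
      have horth0 := FDRep.char_orthonormal (ρ j) (ρ j')
      rw [Nat.card_eq_fintype_card] at horth0
      have horth1 : (Fintype.card G : ℂ)⁻¹ • ∑ g : G, (ρ j).character g * (ρ j').character g⁻¹
          = if Nonempty (ρ j ≅ ρ j') then (1 : ℂ) else 0 := horth0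
      rw [smul_eq_mul, inv_mul_eq_iff_eq_mul₀ hcne] at horth1
      rw [horth1]
      congr 1
      by_cases hjj : j = j'
      · subst hjj
        simp [Nonempty.intro (CategoryTheory.Iso.refl (ρ j))]
      · have hni : ¬ Nonempty (ρ j ≅ ρ j') := fun hne => hjj (hdist j j' hne)
        simp [hni, hjj]
    have hzero : ∀ j' : ι, w j' = 0 := by
      intro j'
      have hfinal : (Fintype.card G : ℂ) * w j' = 0 := by
        calc (Fintype.card G : ℂ) * w j'
            = ∑ j, w j * ((Fintype.card G : ℂ) * (if j = j' then 1 else 0)) := by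
              rw [Finset.sum_eq_single j']
              · simp [mul_comm]
              · intro b _ hb; simp [hb]
              · intro habs; exact absurd (Finset.mem_univ j') habs
          _ = ∑ j, w j * ∑ g : G, (ρ j).character g * (ρ j').character g⁻¹ := by
              refine Finset.sum_congr rfl fun j _ => ?_
              rw [horth j j']
          _ = ∑ j, ∑ g : G, (ρ j).character g * w j * (ρ j').character g⁻¹ := by
              refine Finset.sum_congr rfl fun j _ => ?_
              rw [Finset.mul_sum]
              exact Finset.sum_congr rfl fun g _ => by ring
          _ = ∑ g : G, ∑ j, (ρ j).character g * w j * (ρ j').character g⁻¹ :=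
              Finset.sum_comm
          _ = ∑ g : G, (∑ j, (ρ j).character g * w j) * (ρ j').character g⁻¹ := by
              refine Finset.sum_congr rfl fun g _ => ?_
              rw [Finset.sum_mul]
          _ = 0 := by
              simp only [hallg, zero_mul, Finset.sum_const_zero]
      exact (mul_eq_zero.mp hfinal).resolve_left hcne
    exact hw0 (funext hzero)
  -- determinant of T is nonzero
  have hTkey : ∀ i k, T i k ≠ 0 → ∃ d ∈ (n i).divisors, cl ((h i) ^ (n i / d)) = k ∧ n k = d := by
    intro i k hTik
    have hTik' : (∑ d ∈ (n i).divisors,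
        if cl ((h i) ^ (n i / d)) = k then (d.totient : ℚ) else 0) ≠ 0 := hTik
    obtain ⟨d, hd, hne⟩ := Finset.exists_ne_zero_of_sum_ne_zero hTik'
    have hcond : cl ((h i) ^ (n i / d)) = k := by
      by_contra hc
      rw [if_neg hc] at hne
      exact hne rfl
    refine ⟨d, hd, hcond, ?_⟩
    have h1 := hoconj ((h i) ^ (n i / d))
    rw [hcond] at h1
    show orderOf (h k) = d
    rw [h1]
    exact hord i d hd
  have htri : Matrix.BlockTriangular T (fun i => -(n i : ℤ)) := by
    intro i k hik
    by_contra hne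
    obtain ⟨d, hd, _, hnk⟩ := hTkey i k hne
    have h1 : n k ≤ n i := hnk ▸ Nat.le_of_dvd (hn i) (Nat.mem_divisors.mp hd).1
    simp only [neg_lt_neg_iff, Int.ofNat_lt, Nat.cast_lt] at hik
    omega
  have hdiagpos : ∀ i, 0 < T i i := by
    intro i
    have hmem : n i ∈ (n i).divisors := Nat.mem_divisors_self _ (hn i).ne'
    have hterm : ∀ d ∈ (n i).divisors,
        0 ≤ (if cl ((h i) ^ (n i / d)) = i then (d.totient : ℚ) else 0) := by
      intro d _
      positivity
    have h1 : (if cl ((h i) ^ (n i / n i)) = i then ((n i).totient : ℚ) else 0) ≤ T i i :=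
      Finset.single_le_sum hterm hmem
    rw [Nat.div_self (hn i), pow_one, hclh, if_pos rfl] at h1
    calc (0 : ℚ) < ((n i).totient : ℚ) := by
          exact_mod_cast Nat.totient_pos.mpr (hn i)
      _ ≤ T i i := h1
  have hblockdiag : ∀ i k, i ≠ k → n i = n k → T i k = 0 := by
    intro i k hik hnik
    by_contra hne
    obtain ⟨d, hd, hcond, hnk⟩ := hTkey i k hne
    have hdn : d = n i := by omega
    rw [hdn, Nat.div_self (hn i), pow_one, hclh] at hcond
    exact hik hcond
  have hTdet : T.det ≠ 0 := by
    rw [htri.det]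
    refine Finset.prod_ne_zero_iff.mpr fun a _ => ?_
    have hdiag : T.toSquareBlock (fun i => -(n i : ℤ)) a
        = Matrix.diagonal (fun i : {i // -(n i : ℤ) = a} => T i.1 i.1) := by
      ext ⟨x, hx⟩ ⟨y, hy⟩
      by_cases hxy : x = y
      · subst hxy
        simp [Matrix.toSquareBlock_def]
      · have hne : (⟨x, hx⟩ : {i // -(n i : ℤ) = a}) ≠ ⟨y, hy⟩ := by simpa using hxy
        rw [Matrix.diagonal_apply_ne _ hne]
        have hnxy : n x = n y := by
          have : -(n x : ℤ) = -(n y : ℤ) := by rw [hx, hy]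
          omega
        simp only [Matrix.toSquareBlock_def, Matrix.of_apply]
        exact hblockdiag x y hxy hnxy
    rw [hdiag, Matrix.det_diagonal]
    exact Finset.prod_ne_zero_iff.mpr fun x _ => (hdiagpos x.1).ne'
  -- putting everything together
  have hmapT : (T.map fun q => (q : ℂ)) = (Rat.castHom ℂ).mapMatrix T := by
    ext i k
    simp [RingHom.mapMatrix_apply]
  have hmapM : (Mq.map fun q => (q : ℂ)) = (Rat.castHom ℂ).mapMatrix Mq := by
    ext i k
    simp [RingHom.mapMatrix_apply]
  have hdets := congrArg Matrix.det MAIN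
  rw [Matrix.det_mul, Matrix.det_mul, Matrix.det_diagonal, hmapT, hmapM,
    ← RingHom.map_det, ← RingHom.map_det] at hdets
  have hprod : (∏ i, (n i : ℂ)) ≠ 0 :=
    Finset.prod_ne_zero_iff.mpr fun i _ => Nat.cast_ne_zero.mpr (hn i).ne'
  have hXdet' : ((Rat.castHom ℂ) T.det) * X.det ≠ 0 :=
    mul_ne_zero (by
      simpa using fun hc => hTdet (by exact_mod_cast hc)) hXdet
  have hMdet : Mq.det ≠ 0 := by
    intro hc
    rw [hc] at hdets
    simp only [map_zero, mul_zero] at hdets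
    exact hXdet' hdets.symm
  exact (Matrix.isUnit_iff_isUnit_det Mq).mpr (isUnit_iff_ne_zero.mpr hMdet)
end

section
/- Let G be a finite group all of whose complex characters are rational-valued. Choose representatives h₁, …, h_N of the conjugacy classes of G, ordered so that the order of h_i is nondecreasing in i, and set H_i = ⟨h_i⟩. Then in the basis given by the rows of the character table (rows indexed by irreducible characters evaluated at h₁, …, h_N), the matrix (dim ρ_j^{H_i})_{i,j} is expressible as a lower triangular combination of character table rows with nonzero diagonal entries; in particular the rows of (dim ρ_j^{H_i}) are linearly independent. -/
open Finset LinearMap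

lemma trace_pow_eq {V : Type} [AddCommGroup V] [Module ℂ V] [FiniteDimensional ℂ V]
    (A : V →ₗ[ℂ] V) {n : ℕ} (hn : 0 < n) (hA : A ^ n = 1) {ω : ℂ}
    (hω : IsPrimitiveRoot ω n) :
    ∃ m : ℕ → ℕ, ∀ k : ℕ,
      LinearMap.trace ℂ V (A ^ k) = ∑ t ∈ Finset.range n, (m t : ℂ) * ω ^ (t * k) := by
  have hn0 : (n : ℂ) ≠ 0 := Nat.cast_ne_zero.mpr hn.ne'
  have hω0 : ω ≠ 0 := hω.ne_zero hn.ne'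
  have hωn : ω ^ n = 1 := hω.pow_eq_one
  have hkm : ∀ k : ℕ, ω ^ (k % n) = ω ^ k := by
    intro k
    conv_rhs => rw [← Nat.mod_add_div k n, pow_add, pow_mul, hωn, one_pow, mul_one]
  set T : ℕ → (V →ₗ[ℂ] V) := fun t =>
    (n : ℂ)⁻¹ • ∑ s ∈ Finset.range n, (ω ^ (t * s))⁻¹ • A ^ s with hT
  -- step (a): A * T t = ω ^ t • T t
  have ha : ∀ t, A * T t = ω ^ t • T t := by
    intro t
    have hshift : ∑ s ∈ Finset.range n, (ω ^ (t * (s+1)))⁻¹ • A ^ (s+1)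
        = ∑ s ∈ Finset.range n, (ω ^ (t * s))⁻¹ • A ^ s := by
      set f : ℕ → (V →ₗ[ℂ] V) := fun s => (ω ^ (t * s))⁻¹ • A ^ s with hf
      have hfn : f n = f 0 := by
        have h1 : ω ^ (t * n) = 1 := by rw [mul_comm t n, pow_mul, hωn, one_pow]
        simp only [hf, Nat.mul_zero, pow_zero, hA, h1, inv_one]
      calc ∑ s ∈ Finset.range n, f (s+1)
          = ∑ s ∈ Finset.range (n+1), f s - f 0 := by
            rw [Finset.sum_range_succ' f n]; abel
        _ = ∑ s ∈ Finset.range n, f s := by rw [Finset.sum_range_succ f n, hfn]; abel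
    calc A * T t = (n : ℂ)⁻¹ • ∑ s ∈ Finset.range n, (ω ^ (t * s))⁻¹ • A ^ (s+1) := by
          rw [hT, mul_smul_comm, Finset.mul_sum]
          congr 1
          refine Finset.sum_congr rfl fun s _ => ?_
          rw [mul_smul_comm, ← pow_succ']
      _ = (n : ℂ)⁻¹ • ∑ s ∈ Finset.range n, (ω ^ t) • ((ω ^ (t * (s+1)))⁻¹ • A ^ (s+1)) := by
          congr 1
          refine Finset.sum_congr rfl fun s _ => ?_
          rw [smul_smul]
          congr 1
          rw [mul_add t s 1, pow_add, mul_inv, mul_one]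
          field_simp
      _ = ω ^ t • T t := by
          rw [← Finset.smul_sum, hshift, hT, smul_comm]
  -- step (b)
  have hb : ∀ a t, A ^ a * T t = ω ^ (t * a) • T t := by
    intro a t
    induction a with
    | zero => simp
    | succ a ih =>
        rw [pow_succ, mul_assoc, ha, mul_smul_comm, ih, smul_smul, ← pow_add]
        congr 1
        ring
  -- step (c): idempotent
  have hc : ∀ t, T t * T t = T t := by
    intro t
    nth_rewrite 1 [hT]
    simp only [smul_mul_assoc, Finset.sum_mul]
    have h1 : ∀ s ∈ Finset.range n, (ω ^ (t * s))⁻¹ • (A ^ s * T t) = T t := by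
      intro s _
      rw [hb s t, smul_smul, inv_mul_cancel₀ (pow_ne_zero _ hω0), one_smul]
    rw [Finset.sum_congr rfl h1, Finset.sum_const, Finset.card_range,
      ← Nat.cast_smul_eq_nsmul ℂ, smul_smul, inv_mul_cancel₀ hn0, one_smul]
  -- step (d): trace of T t is a natural number
  have hd : ∀ t, ∃ m : ℕ, LinearMap.trace ℂ V (T t) = (m : ℂ) := by
    intro t
    have hproj : LinearMap.IsProj (LinearMap.range (T t)) (T t) := by
      constructor
      · exact fun x => LinearMap.mem_range_self _ x
      · rintro x ⟨y, rfl⟩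
        have := congrArg (fun f => f y) (hc t)
        simpa [Module.End.mul_apply] using this
    exact ⟨Module.finrank ℂ (LinearMap.range (T t)), hproj.trace⟩
  choose m hm using hd
  refine ⟨m, fun k => ?_⟩
  -- step (e): reconstruction
  have he : ∑ t ∈ Finset.range n, ω ^ (t * k) • T t = A ^ (k % n) := by
    have hterm : ∀ t, ω ^ (t * k) • T t
        = ∑ s ∈ Finset.range n, ((n:ℂ)⁻¹ * (ω ^ k * (ω ^ s)⁻¹) ^ t) • A ^ s := by
      intro t
      rw [hT]
      rw [smul_smul, Finset.smul_sum]
      refine Finset.sum_congr rfl fun s _ => ?_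
      rw [smul_smul]
      congr 1
      rw [mul_pow, inv_pow, ← pow_mul, ← pow_mul, mul_comm k t, mul_comm s t]
      ring
    rw [Finset.sum_congr rfl fun t _ => hterm t, Finset.sum_comm]
    have hinner : ∀ s ∈ Finset.range n,
        ∑ t ∈ Finset.range n, ((n:ℂ)⁻¹ * (ω ^ k * (ω ^ s)⁻¹) ^ t) • A ^ s
          = if s = k % n then A ^ (k % n) else 0 := by
      intro s hs
      rw [Finset.mem_range] at hs
      rw [← Finset.sum_smul, ← Finset.mul_sum]
      by_cases hcase : s = k % n
      · subst hcase
        have hx : ω ^ k * (ω ^ (k % n))⁻¹ = 1 := by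
          rw [hkm k]
          exact mul_inv_cancel₀ (pow_ne_zero _ hω0)
        rw [hx, if_pos rfl]
        simp [hn0]
      · have hx : ω ^ k * (ω ^ s)⁻¹ ≠ 1 := by
          intro hcon
          apply hcase
          have h2 : ω ^ k = ω ^ s := by
            field_simp at hcon
            try exact hcon
            try exact hcon.symm
          exact hω.pow_inj hs (Nat.mod_lt _ hn) (by rw [hkm k]; exact h2.symm)
        rw [if_neg hcase, geom_sum_eq hx]
        have hxn : (ω ^ k * (ω ^ s)⁻¹) ^ n = 1 := by
          rw [mul_pow, inv_pow, ← pow_mul, ← pow_mul, mul_comm k n, mul_comm s n,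
            pow_mul, pow_mul, hωn, one_pow, one_pow, inv_one, mul_one]
        rw [hxn, sub_self, zero_div, mul_zero, zero_smul]
    rw [Finset.sum_congr rfl hinner, Finset.sum_ite_eq' (Finset.range n) (k % n)
      (fun _ => A ^ (k % n)), if_pos (Finset.mem_range.mpr (Nat.mod_lt _ hn))]
  -- step (f)
  have hf2 : A ^ k = A ^ (k % n) := by
    conv_lhs => rw [← Nat.mod_add_div k n, pow_add, pow_mul, hA, one_pow, mul_one]
  rw [hf2, ← he, map_sum]
  refine Finset.sum_congr rfl fun t _ => ?_
  rw [LinearMap.map_smul, hm t, smul_eq_mul, mul_comm]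

lemma char_pow_eq_of_rat {G : Type} [Group G] [Fintype G] (V : FDRep ℂ G) (g : G)
    (hq : ∃ q : ℚ, V.character g = (q : ℂ)) (k : ℕ) (hk : Nat.Coprime k (orderOf g)) :
    V.character (g ^ k) = V.character g := by
  obtain ⟨q, hq⟩ := hq
  have hn : 0 < orderOf g := orderOf_pos g
  set n := orderOf g with hn'
  set np : ℕ+ := ⟨n, hn⟩ with hnp
  haveI : NeZero n := ⟨hn.ne'⟩
  set K := CyclotomicField n ℚ with hK
  haveI : NeZero (n : ℚ) := ⟨Nat.cast_ne_zero.mpr hn.ne'⟩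
  haveI : IsCyclotomicExtension {n} ℚ K := CyclotomicField.isCyclotomicExtension n ℚ
  haveI : FiniteDimensional ℚ K := IsCyclotomicExtension.finiteDimensional {n} ℚ K
  haveI : Algebra.IsAlgebraic ℚ K := Algebra.IsAlgebraic.of_finite _ _
  set φ : K →ₐ[ℚ] ℂ := IsAlgClosed.lift with hφ
  set ζ := IsCyclotomicExtension.zeta n ℚ K with hζdef
  have hζ := IsCyclotomicExtension.zeta_spec n ℚ K
  have hφinj : Function.Injective φ := φ.toRingHom.injective
  have hω : IsPrimitiveRoot (φ ζ) n := hζ.map_of_injective hφinj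
  set ω := φ ζ with hωdef
  set A := V.ρ g with hA'
  have hA : A ^ n = 1 := by rw [hA', ← map_pow, hn', pow_orderOf_eq_one, map_one]
  obtain ⟨m, hm⟩ := trace_pow_eq A hn hA hω
  have hchar : ∀ a : ℕ, V.character (g ^ a) = ∑ t ∈ Finset.range n, (m t : ℂ) * ω ^ (t * a) := by
    intro a
    rw [← hm a]
    show LinearMap.trace ℂ V (V.ρ (g ^ a)) = _
    rw [map_pow]
  have hζn : ζ ^ n = 1 := hζ.pow_eq_one
  have hkmζ : ∀ a : ℕ, ζ ^ (a % n) = ζ ^ a := by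
    intro a
    conv_rhs => rw [← Nat.mod_add_div a n, pow_add, pow_mul, hζn, one_pow, mul_one]
  set y := ∑ t ∈ Finset.range n, (m t : K) * ζ ^ t with hy
  have hφy : φ y = (q : ℂ) := by
    rw [hy, map_sum, ← hq]
    have := hchar 1
    rw [pow_one] at this
    rw [this]
    refine Finset.sum_congr rfl fun t _ => ?_
    rw [map_mul, map_pow, map_natCast, mul_one]
  have hyq : y = algebraMap ℚ K q := by
    apply hφinj
    rw [AlgHom.commutes, hφy]
    exact (eq_ratCast (algebraMap ℚ ℂ) q).symm
  have hirr : Irreducible (Polynomial.cyclotomic n ℚ) :=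
    Polynomial.cyclotomic.irreducible_rat hn
  set σ := (IsCyclotomicExtension.autEquivPow K hirr).symm (ZMod.unitOfCoprime k hk) with hσ
  have h2 : hζ.autToPow ℚ σ = ZMod.unitOfCoprime k hk := by
    have h3 := (IsCyclotomicExtension.autEquivPow K hirr).apply_symm_apply
      (ZMod.unitOfCoprime k hk)
    rw [← h3, hσ]
    rfl
  have hσζ : σ ζ = ζ ^ (k % n) := by
    have h1 := hζ.autToPow_spec ℚ σ
    rw [h2, ZMod.coe_unitOfCoprime, ZMod.val_natCast] at h1
    exact h1.symm
  have hσy : σ y = ∑ t ∈ Finset.range n, (m t : K) * ζ ^ (t * k) := by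
    rw [hy, map_sum]
    refine Finset.sum_congr rfl fun t _ => ?_
    rw [map_mul, map_natCast, map_pow, hσζ, hkmζ k, ← pow_mul, mul_comm k t]
  have hy2 : σ y = y := by rw [hyq, AlgEquiv.commutes]
  have h4 : V.character (g ^ k) = φ (σ y) := by
    rw [hσy, map_sum, hchar k]
    refine Finset.sum_congr rfl fun t _ => ?_
    rw [map_mul, map_natCast, map_pow]
  rw [h4, hy2, hφy, hq]

lemma char_gcd_eq {G : Type} [Group G] [Fintype G] (V : FDRep ℂ G)
    (hrat : ∀ (W : FDRep ℂ G) (g : G), ∃ q : ℚ, W.character g = (q : ℂ))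
    (g : G) (s : ℕ) :
    V.character (g ^ s) = V.character (g ^ Nat.gcd s (orderOf g)) := by
  rcases Nat.eq_zero_or_pos s with hs | hs
  · subst hs
    rw [Nat.gcd_zero_left, pow_zero, pow_orderOf_eq_one]
  · set n := orderOf g with hn'
    set e := Nat.gcd s n with he'
    have he : 0 < e := Nat.gcd_pos_of_pos_left n hs
    have hes : e ∣ s := Nat.gcd_dvd_left s n
    have hen : e ∣ n := Nat.gcd_dvd_right s n
    have hord : orderOf (g ^ e) = n / e := by
      rw [orderOf_pow, ← hn', Nat.gcd_eq_right hen]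
    have hcop : Nat.Coprime (s / e) (orderOf (g ^ e)) := by
      rw [hord]
      exact Nat.coprime_div_gcd_div_gcd he
    have := char_pow_eq_of_rat V (g ^ e) (hrat V (g ^ e)) (s / e) hcop
    rw [← pow_mul, Nat.mul_div_cancel' hes] at this
    exact this

lemma finrank_invariants_eq {G : Type} [Group G] [Fintype G] (V : FDRep ℂ G) (g : G) :
    ((Module.finrank ℂ (Representation.invariants
        (V.ρ.comp (Subgroup.zpowers g).subtype))) : ℂ)
      = (orderOf g : ℂ)⁻¹ * ∑ s ∈ Finset.range (orderOf g), V.character (g ^ s) := by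
  classical
  set H := Subgroup.zpowers g with hH
  set W : FDRep ℂ ↥H := FDRep.of (V.ρ.comp H.subtype) with hW
  have hcard : Fintype.card ↥H = orderOf g := Fintype.card_zpowers
  have hcard0 : (Fintype.card ↥H : ℂ) ≠ 0 := Nat.cast_ne_zero.mpr Fintype.card_ne_zero
  haveI : Invertible ((Fintype.card ↥H : ℂ)) := invertibleOfNonzero hcard0
  have havg := FDRep.average_char_eq_finrank_invariants W
  have hWρ : W.ρ = V.ρ.comp H.subtype := rfl
  rw [hWρ] at havg
  have hchar : ∀ x : ↥H, W.character x = V.character (x : G) := fun x => rfl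
  have hsum : ∑ x : ↥H, W.character x = ∑ s ∈ Finset.range (orderOf g), V.character (g ^ s) := by
    have e := finEquivZPowers (isOfFinOrder_of_finite g)
    rw [← Fin.sum_univ_eq_sum_range (fun s => V.character (g ^ s)) (orderOf g)]
    rw [Finset.sum_congr rfl (fun x _ => hchar x)]
    exact (Fintype.sum_equiv (finEquivZPowers (isOfFinOrder_of_finite g))
      (fun i => V.character (g ^ (i : ℕ))) (fun x => V.character (x : G))
      (fun i => rfl)).symm
  rw [hsum, Nat.card_eq_fintype_card, hcard] at havg
  exact havg.symm

lemma charTable_isUnit {G : Type} [Group G] [Fintype G] {N : ℕ}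
    (ρ : Fin N → FDRep ℂ G)
    (hirr : ∀ i, CategoryTheory.Simple (ρ i))
    (hdist : ∀ i j, Nonempty (ρ i ≅ ρ j) → i = j)
    (h : Fin N → G)
    (hsurj : ∀ g : G, ∃ i, IsConj g (h i))
    (C : Matrix (Fin N) (Fin N) ℂ)
    (hC : ∀ m j, C m j = (ρ j).character (h m)) : IsUnit C := by
  classical
  rw [← Matrix.linearIndependent_cols_iff_isUnit]
  rw [Fintype.linearIndependent_iff]
  intro c hc k
  have hcm : ∀ m, ∑ j, c j * C m j = 0 := by
    intro m
    have := congrFun hc m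
    simpa [Finset.sum_apply] using this
  have hall : ∀ x : G, ∑ j, c j * (ρ j).character x = 0 := by
    intro x
    obtain ⟨m, hm⟩ := hsurj x
    have hx : ∀ j, (ρ j).character x = (ρ j).character (h m) := by
      intro j
      obtain ⟨u, hu⟩ := isConj_iff.mp hm
      rw [← hu, FDRep.char_conj]
    calc ∑ j, c j * (ρ j).character x = ∑ j, c j * C m j := by
          refine Finset.sum_congr rfl fun j _ => ?_
          rw [hx j, hC m j]
      _ = 0 := hcm m
  letI inst1 : Fintype G := ‹Fintype G›
  have hG0 : ((Nat.card G : ℂ)) ≠ 0 := Nat.cast_ne_zero.mpr Nat.card_pos.ne'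
  letI instInv : Invertible ((Nat.card G : ℂ)) := invertibleOfNonzero hG0
  have horto : ∀ j, ∑ x : G, (ρ j).character x * (ρ k).character x⁻¹
      = (Nat.card G : ℂ) * (if j = k then 1 else 0) := by
    intro j
    haveI := hirr j; haveI := hirr k
    have hon := FDRep.char_orthonormal (k := ℂ) (G := G) (ρ j) (ρ k)
    have h1 : (∑ x : G, (ρ j).character x * (ρ k).character x⁻¹)
        = (Nat.card G : ℂ) *
          ((Nat.card G : ℂ)⁻¹ *
            ∑ x : G, (ρ j).character x * (ρ k).character x⁻¹) := by
      rw [← mul_assoc, mul_inv_cancel₀ hG0, one_mul]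
    rw [h1, hon]
    congr 1
    by_cases hjk : j = k
    · subst hjk
      rw [if_pos ⟨CategoryTheory.Iso.refl _⟩, if_pos rfl]
    · rw [if_neg (fun hne => hjk (hdist j k hne)), if_neg hjk]
  have h0 : ∑ x : G, (∑ j, c j * (ρ j).character x) * (ρ k).character x⁻¹ = 0 := by
    refine Finset.sum_eq_zero fun x _ => ?_
    rw [hall x, zero_mul]
  have h2 : ∑ x : G, (∑ j, c j * (ρ j).character x) * (ρ k).character x⁻¹
      = c k * (Nat.card G : ℂ) := by
    calc ∑ x : G, (∑ j, c j * (ρ j).character x) * (ρ k).character x⁻¹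
        = ∑ x : G, ∑ j, c j * ((ρ j).character x * (ρ k).character x⁻¹) := by
          refine Finset.sum_congr rfl fun x _ => ?_
          rw [Finset.sum_mul]
          exact Finset.sum_congr rfl fun j _ => by ring
      _ = ∑ j, ∑ x : G, c j * ((ρ j).character x * (ρ k).character x⁻¹) :=
          Finset.sum_comm
      _ = ∑ j, c j * ((Nat.card G : ℂ) * (if j = k then 1 else 0)) := by
          refine Finset.sum_congr rfl fun j _ => ?_
          rw [← Finset.mul_sum, horto j]
      _ = c k * (Nat.card G : ℂ) := by
          simp_rw [mul_ite, mul_one, mul_zero]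
          rw [Finset.sum_ite_eq' Finset.univ k
            (fun j => c j * (Nat.card G : ℂ))]
          rw [if_pos (Finset.mem_univ k)]
  rw [h2] at h0
  exact (mul_eq_zero.mp h0).resolve_right hG0


/-- With conjugacy class representatives `h 1, …, h N` ordered by nondecreasing
element order, `Hᵢ = ⟨h i⟩`, `M i j = dim ρⱼ^{Hᵢ}` and `C m j = χⱼ(h m)` the
character table, the matrix `M` is a lower triangular combination (with nonzero
diagonal) of the rows of the character table: `M = L * C` with `L` lower
triangular and nonzero on the diagonal; in particular the rows of `M` are
linearly independent. -/
theorem matrix_finrank_invariants_lowerTriangular_combination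
    {G : Type} [Group G] [Fintype G] {N : ℕ}
    (ρ : Fin N → FDRep ℂ G)
    (hirr : ∀ i, CategoryTheory.Simple (ρ i))
    (hdist : ∀ i j, Nonempty (ρ i ≅ ρ j) → i = j)
    (hcomplete : ∀ V : FDRep ℂ G, CategoryTheory.Simple V → ∃ i, Nonempty (ρ i ≅ V))
    (hrat : ∀ (V : FDRep ℂ G) (g : G), ∃ q : ℚ, V.character g = (q : ℂ))
    (h : Fin N → G)
    (hrep : ∀ i j, IsConj (h i) (h j) → i = j)
    (hsurj : ∀ g : G, ∃ i, IsConj g (h i))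
    (hmono : Monotone fun i => orderOf (h i))
    (M C : Matrix (Fin N) (Fin N) ℂ)
    (hM : ∀ i j, M i j = (Module.finrank ℂ (Representation.invariants
      ((ρ j).ρ.comp (Subgroup.zpowers (h i)).subtype)) : ℂ))
    (hC : ∀ m j, C m j = (ρ j).character (h m)) :
    (∃ L : Matrix (Fin N) (Fin N) ℂ,
        (∀ i m, i < m → L i m = 0) ∧ (∀ i, L i i ≠ 0) ∧ M = L * C)
      ∧ LinearIndependent ℂ (fun i => M i) := by
  classical
  choose cls hclsspec using hsurj
  have hclsh : ∀ i, cls (h i) = i := fun i => (hrep i (cls (h i)) (hclsspec (h i))).symm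
  set n : Fin N → ℕ := fun i => orderOf (h i) with hn
  have hn0 : ∀ i, 0 < n i := fun i => orderOf_pos _
  set L : Matrix (Fin N) (Fin N) ℂ := fun i m =>
    (n i : ℂ)⁻¹ * (((Finset.range (n i)).filter
      (fun s => cls ((h i) ^ (Nat.gcd s (n i))) = m)).card : ℂ) with hL
  have htri : ∀ i m, i < m → L i m = 0 := by
    intro i m him
    rw [hL]
    apply mul_eq_zero_of_right
    rw [Nat.cast_eq_zero, Finset.card_eq_zero, Finset.filter_eq_empty_iff]
    intro s hs hcon
    set e := Nat.gcd s (n i) with he'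
    have hconj : IsConj ((h i) ^ e) (h m) := hcon ▸ hclsspec ((h i) ^ e)
    obtain ⟨c, hc⟩ := hconj
    have hord : orderOf ((h i) ^ e) = orderOf (h m) := SemiconjBy.orderOf_eq (↑c) hc
    have hen : e ∣ n i := Nat.gcd_dvd_right _ _
    have h1 : orderOf ((h i) ^ e) = n i / e := by
      rw [orderOf_pow, Nat.gcd_eq_right hen]
    have h2 : n i ≤ orderOf (h m) := hmono (le_of_lt him)
    have h3 : n i / e = n i :=
      le_antisymm (Nat.div_le_self _ _) (by rw [← h1, hord]; exact h2)
    have he1 : e = 1 := ((Nat.div_eq_self.mp h3).resolve_left (hn0 i).ne').symm ▸ rfl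
    rw [he1, pow_one, hclsh i] at hcon
    exact absurd hcon (ne_of_lt him)
  have hdiag : ∀ i, L i i ≠ 0 := by
    intro i
    rw [hL]
    apply mul_ne_zero (inv_ne_zero (Nat.cast_ne_zero.mpr (hn0 i).ne'))
    rw [Nat.cast_ne_zero, ← Nat.pos_iff_ne_zero, Finset.card_pos]
    refine ⟨1 % n i, Finset.mem_filter.mpr ⟨Finset.mem_range.mpr (Nat.mod_lt _ (hn0 i)), ?_⟩⟩
    have hgcd : Nat.gcd (1 % n i) (n i) = 1 := by
      rcases Nat.lt_or_ge 1 (n i) with h1 | h1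
      · rw [Nat.mod_eq_of_lt h1]
        exact Nat.gcd_one_left _
      · have h2 : n i = 1 := le_antisymm h1 (hn0 i)
        rw [h2]
        simp
    rw [hgcd, pow_one, hclsh i]
  have hMLC : M = L * C := by
    ext i j
    rw [Matrix.mul_apply, hM, finrank_invariants_eq (ρ j) (h i)]
    have key : ∑ s ∈ Finset.range (n i), (ρ j).character ((h i) ^ s)
        = ∑ m : Fin N, ((((Finset.range (n i)).filter
            (fun s => cls ((h i) ^ (Nat.gcd s (n i))) = m)).card : ℂ)
          * (ρ j).character (h m)) := by
      have e1 : ∀ s ∈ Finset.range (n i), (ρ j).character ((h i) ^ s)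
          = (ρ j).character (h (cls ((h i) ^ (Nat.gcd s (n i))))) := by
        intro s _
        rw [char_gcd_eq (ρ j) hrat (h i) s]
        obtain ⟨u, hu⟩ := isConj_iff.mp (hclsspec ((h i) ^ (Nat.gcd s (n i))))
        rw [← hu, FDRep.char_conj]
      rw [Finset.sum_congr rfl e1]
      rw [← Finset.sum_fiberwise (Finset.range (n i))
        (fun s => cls ((h i) ^ (Nat.gcd s (n i))))
        (fun s => (ρ j).character (h (cls ((h i) ^ (Nat.gcd s (n i))))))]
      refine Finset.sum_congr rfl fun m _ => ?_
      rw [Finset.sum_congr rfl (fun s hs => by rw [(Finset.mem_filter.mp hs).2]),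
        Finset.sum_const, nsmul_eq_mul]
    rw [key, Finset.mul_sum]
    refine Finset.sum_congr rfl fun m _ => ?_
    rw [hL, hC]
    ring
  have hCu : IsUnit C := charTable_isUnit ρ hirr hdist h (fun g => ⟨cls g, hclsspec g⟩) C hC
  have hLtri : L.BlockTriangular OrderDual.toDual := by
    intro i m hlt
    exact htri i m hlt
  have hLu : IsUnit L := by
    rw [Matrix.isUnit_iff_isUnit_det, Matrix.det_of_lowerTriangular L hLtri, isUnit_iff_ne_zero]
    exact Finset.prod_ne_zero_iff.mpr fun i _ => hdiag i
  have hMu : IsUnit M := by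
    rw [hMLC]
    exact hLu.mul hCu
  exact ⟨⟨L, htri, hdiag, hMLC⟩, Matrix.linearIndependent_rows_iff_isUnit.mpr hMu⟩
end
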